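/- A sparse vector x with ‖x‖₀ ≤ L can be uniquely recovered from measurements y = Cx (i.e., for all x₁, x₂ with ‖x₁‖₀ ≤ L, ‖x₂‖₀ ≤ L, Cx₁ = Cx₂ implies x₁ = x₂) if and only if spark(C) > 2L. -/

import Mathlib

/-- The spark of a matrix: the smallest number of nonzero entries of a nonzero
vector in its kernel, with value `⊤` if the columns are linearly independent. -/
noncomputable def spark {m n : Type*} [Fintype m] [Fintype n] (M : Matrix m n ℂ) : ℕ∞ :=
  sInf {k : ℕ∞ | ∃ x : n → ℂ, x ≠ 0 ∧ M.mulVec x = 0 ∧ ((Function.support x).ncard : ℕ∞) = k}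

theorem stmt4 (m n L : ℕ) (C : Matrix (Fin m) (Fin n) ℂ) :
    (∀ x₁ x₂ : Fin n → ℂ, (Function.support x₁).ncard ≤ L →
        (Function.support x₂).ncard ≤ L → C.mulVec x₁ = C.mulVec x₂ → x₁ = x₂)
      ↔ (2 * L : ℕ∞) < spark C := by
  constructor
  · intro h
    have key : ∀ k ∈ {k : ℕ∞ | ∃ x : Fin n → ℂ, x ≠ 0 ∧ C.mulVec x = 0 ∧
        ((Function.support x).ncard : ℕ∞) = k}, (2 * L + 1 : ℕ∞) ≤ k := by
      rintro k ⟨x, hx, hker, rfl⟩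
      by_contra hlt
      push_neg at hlt
      have hcard : (Function.support x).ncard ≤ 2 * L := by
        have := Order.le_of_lt_add_one hlt
        exact_mod_cast this
      set s := Function.support x with hs
      by_cases hL : s.ncard ≤ L
      · exact hx (h x 0 hL (by simp) (by simp [hker]))
      · push_neg at hL
        obtain ⟨t, hts, htc⟩ := Set.exists_subset_card_eq (hL.le : L ≤ s.ncard)
        set x₁ : Fin n → ℂ := t.indicator x with hx₁
        set x₂ : Fin n → ℂ := -((s \ t).indicator x) with hx₂
        have hxsub : x₁ - x₂ = x := by
          funext i
          by_cases hi : i ∈ t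
          · have his : i ∉ s \ t := fun h' => h'.2 hi
            simp [hx₁, hx₂, Set.indicator_of_mem hi, Set.indicator_of_notMem his]
          · by_cases his : i ∈ s
            · simp [hx₁, hx₂, Set.indicator_of_notMem hi,
                Set.indicator_of_mem (Set.mem_diff_of_mem his hi)]
            · have hxi : x i = 0 := Function.notMem_support.mp his
              have his' : i ∉ s \ t := fun h' => his h'.1
              simp [hx₁, hx₂, Set.indicator_of_notMem hi, Set.indicator_of_notMem his', hxi]
        have h1 : (Function.support x₁).ncard ≤ L := by
          calc (Function.support x₁).ncard ≤ t.ncard :=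
                Set.ncard_le_ncard (Set.support_indicator_subset) t.toFinite
            _ = L := htc
        have h2 : (Function.support x₂).ncard ≤ L := by
          have hsub : Function.support x₂ ⊆ s \ t := by
            intro i hi
            simp only [hx₂, Function.mem_support, Pi.neg_apply, neg_ne_zero] at hi
            exact Set.support_indicator_subset hi
          calc (Function.support x₂).ncard ≤ (s \ t).ncard :=
                Set.ncard_le_ncard hsub (s \ t).toFinite
            _ = s.ncard - t.ncard := Set.ncard_diff hts
            _ ≤ 2 * L - L := by omega
            _ = L := by omega
        have hmv : C.mulVec x₁ = C.mulVec x₂ := by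
          have : C.mulVec (x₁ - x₂) = 0 := by rw [hxsub]; exact hker
          rw [Matrix.mulVec_sub] at this
          exact sub_eq_zero.mp this
        have heq := h x₁ x₂ h1 h2 hmv
        have : x₁ = 0 := by
          funext i
          by_cases hi : i ∈ t
          · have : x₂ i = 0 := by
              have : i ∉ s \ t := fun h' => h'.2 hi
              simp [hx₂, Set.indicator_of_notMem this]
            rw [heq]; simpa using this
          · simp [hx₁, Set.indicator_of_notMem hi]
        apply hx
        rw [← hxsub, this, heq.symm, this, sub_zero]  -- x = x₁ - x₂ = 0
    have : (2 * L + 1 : ℕ∞) ≤ spark C := le_sInf key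
    calc (2 * L : ℕ∞) < 2 * L + 1 := by
          exact ENat.lt_add_one_iff (by
            simp only [ne_eq]
            exact_mod_cast fun h => (ENat.coe_ne_top (2*L)) (by exact_mod_cast h)) |>.mpr le_rfl
      _ ≤ spark C := this
  · intro h x₁ x₂ h1 h2 hmv
    by_contra hne
    have hx : x₁ - x₂ ≠ 0 := sub_ne_zero.mpr hne
    have hker : C.mulVec (x₁ - x₂) = 0 := by
      rw [Matrix.mulVec_sub, hmv, sub_self]
    have hcard : (Function.support (x₁ - x₂)).ncard ≤ 2 * L := by
      calc (Function.support (x₁ - x₂)).ncard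
          ≤ (Function.support x₁ ∪ Function.support x₂).ncard :=
            Set.ncard_le_ncard (Function.support_sub x₁ x₂) (Set.toFinite _)
        _ ≤ (Function.support x₁).ncard + (Function.support x₂).ncard :=
            Set.ncard_union_le _ _
        _ ≤ 2 * L := by omega
    have hmem : ((Function.support (x₁ - x₂)).ncard : ℕ∞) ∈
        {k : ℕ∞ | ∃ x : Fin n → ℂ, x ≠ 0 ∧ C.mulVec x = 0 ∧
          ((Function.support x).ncard : ℕ∞) = k} := ⟨x₁ - x₂, hx, hker, rfl⟩
    have hle : spark C ≤ ((Function.support (x₁ - x₂)).ncard : ℕ∞) := sInf_le hmem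
    have : spark C ≤ (2 * L : ℕ∞) := hle.trans (by exact_mod_cast hcard)
    exact absurd h (not_lt.mpr this)
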